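/- arXiv:1112.2312 — 2 statements merged into one kernel-verified Lean document; each statement's English description precedes it below -/
import Mathlib

section
/- Let M be a Morse matching on a graded poset P. If r and s are equivalent rays in H_M(P), then r and s have the same degree, i.e. min{i : deg(r_j) = i for some j} = min{i : deg(s_j) = i for some j}. -/
/-- A directed simple path of length `n` in the digraph with arrow relation `A`:
a sequence `p 0, …, p n` of pairwise distinct vertices with an arrow from each
vertex to the next. -/
def IsPathOn {V : Type*} (A : V → V → Prop) (n : ℕ) (p : ℕ → V) : Prop :=
  (∀ i j, i ≤ n → j ≤ n → p i = p j → i = j) ∧ ∀ i, i < n → A (p i) (p (i + 1))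

/-- A digraph is acyclic if no directed simple path can be closed up by an arrow
from its last vertex to its first. -/
def DAcyclic {V : Type*} (A : V → V → Prop) : Prop :=
  ¬ ∃ (n : ℕ) (p : ℕ → V), IsPathOn A n p ∧ A (p n) (p 0)

/-- A (directed) ray: pairwise distinct vertices `r 0, r 1, …` with an arrow from
`r i` to `r (i+1)` for every `i`. -/
def IsRay {V : Type*} (A : V → V → Prop) (r : ℕ → V) : Prop :=
  Function.Injective r ∧ ∀ i : ℕ, A (r i) (r (i + 1))

/-- A digraph is rayless if it contains no ray. -/
def Rayless {V : Type*} (A : V → V → Prop) : Prop := ¬ ∃ r : ℕ → V, IsRay A r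

/-- Two rays are equivalent if they coincide from some point on. -/
def RayEquiv {V : Type*} (r s : ℕ → V) : Prop :=
  ∃ M N : ℕ, ∀ i : ℕ, r (M + i) = s (N + i)

/-- The ray `r` has a bypass starting at `r n`: a directed simple path, not
contained in `r`, from `r n` to `r (n + k)` for some `k > 0`. -/
def HasBypassAt {V : Type*} (A : V → V → Prop) (r : ℕ → V) (n : ℕ) : Prop :=
  ∃ k : ℕ, 0 < k ∧ ∃ (m : ℕ) (p : ℕ → V), IsPathOn A m p ∧ p 0 = r n ∧
    p m = r (n + k) ∧ ∃ i ≤ m, ∀ j : ℕ, p i ≠ r j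

/-- A multiray: a ray having bypasses starting arbitrarily far along it. -/
def IsMultiray {V : Type*} (A : V → V → Prop) (r : ℕ → V) : Prop :=
  IsRay A r ∧ ∀ N : ℕ, ∃ i : ℕ, HasBypassAt A r (N + i)

/-- The family of equivalence classes of rays of the digraph `A`. -/
def RayClasses {V : Type*} (A : V → V → Prop) : Set (Set (ℕ → V)) :=
  {C | ∃ r : ℕ → V, IsRay A r ∧ C = {s | IsRay A s ∧ RayEquiv r s}}

section Poset

variable {P : Type*} [PartialOrder P]

/-- A chain contained in the principal ideal `x↓`. -/
def IsChainIn (x : P) (C : Set P) : Prop := C ⊆ Set.Iic x ∧ IsChain (· ≤ ·) C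

/-- A maximal chain in the principal ideal `x↓`. -/
def IsMaxChainIn (x : P) (C : Set P) : Prop :=
  IsChainIn x C ∧ ∀ D : Set P, IsChainIn x D → C ⊆ D → C = D

/-- `P` is graded with degree function `deg`: for every `x`, every maximal chain
in `x↓` is finite of length `deg x` (i.e. cardinality `deg x + 1`). -/
def GradedDeg (deg : P → ℕ) : Prop :=
  ∀ x : P, ∀ C : Set P, IsMaxChainIn x C → C.Finite ∧ C.ncard = deg x + 1

/-- A matching on the Hasse diagram of `P`: a set of arrows `(x, y)` (where `x`
covers `y`) no two of which share a vertex. -/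
def IsMatching (M : Set (P × P)) : Prop :=
  (∀ e ∈ M, e.2 ⋖ e.1) ∧
  ∀ e ∈ M, ∀ f ∈ M, e ≠ f → e.1 ≠ f.1 ∧ e.1 ≠ f.2 ∧ e.2 ≠ f.1 ∧ e.2 ≠ f.2

/-- The arrow relation of the digraph `H_M(P)`, obtained from the Hasse diagram
of `P` by reversing the arrows belonging to `M`. -/
def HasseM (M : Set (P × P)) (x y : P) : Prop :=
  (y ⋖ x ∧ (x, y) ∉ M) ∨ (y, x) ∈ M

/-- A Morse matching: a matching `M` on the Hasse diagram such that `H_M(P)` is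
acyclic. -/
def IsMorse (M : Set (P × P)) : Prop := IsMatching M ∧ DAcyclic (HasseM M)

/-- An element is critical for `M` if it is matched with no other element. -/
def Critical (M : Set (P × P)) (x : P) : Prop := ∀ e ∈ M, e.1 ≠ x ∧ e.2 ≠ x

/-- The set of critical elements of the matching `M`. -/
def Crit (M : Set (P × P)) : Set P := {x | Critical M x}

/-- The degree of a ray `r`: the minimal degree of an element appearing on `r`. -/
noncomputable def rayDeg (deg : P → ℕ) (r : ℕ → P) : ℕ := sInf {i | ∃ j : ℕ, deg (r j) = i}

/-- `M₊(x)`: if `x` is matched with an element `z` of degree `deg x + 1`, the set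
of elements `y ≠ x` covered by `z`; otherwise empty. -/
def Mplus (M : Set (P × P)) (deg : P → ℕ) (x : P) : Set P :=
  {y | ∃ z : P, (z, x) ∈ M ∧ deg z = deg x + 1 ∧ y ≠ x ∧ y ⋖ z}

/-- The stages `Dₖ(x)` of the construction of `D_M(x)`. -/
def Dk (M : Set (P × P)) (deg : P → ℕ) (x : P) : ℕ → Set P
  | 0 => {x}
  | (k + 1) => Dk M deg x k ∪ ⋃ y ∈ Dk M deg x k, Mplus M deg y

/-- The vertex set of the digraph `D_M(x)`. -/
def Dset (M : Set (P × P)) (deg : P → ℕ) (x : P) : Set P := ⋃ k : ℕ, Dk M deg x k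

/-- The arrow relation of the digraph `D_M(x)`: an arrow from `y` to each element
of `M₊(y)`. -/
def DArrow (M : Set (P × P)) (deg : P → ℕ) (x : P) (y z : P) : Prop :=
  y ∈ Dset M deg x ∧ z ∈ Mplus M deg y

/-- `L_M(x)`: the length of the longest directed simple path in `D_M(x)`. -/
noncomputable def LM (M : Set (P × P)) (deg : P → ℕ) (x : P) : ℕ :=
  sSup {n | ∃ p : ℕ → P, IsPathOn (DArrow M deg x) n p ∧ ∀ i ≤ n, p i ∈ Dset M deg x}

end Poset

section Aux

variable {P : Type*} [PartialOrder P]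

lemma exists_maxChainIn (y : P) : ∃ C : Set P, IsMaxChainIn y C ∧ y ∈ C := by
  obtain ⟨T, hT, -⟩ :=
    (IsChain.empty (r := fun a b : Set.Iic y => (a : P) ≤ b)).exists_maxChain
  have hyT : (⟨y, le_refl y⟩ : Set.Iic y) ∈ T := by
    have hins : IsChain (fun a b : Set.Iic y => (a : P) ≤ b)
        (insert (⟨y, le_refl y⟩ : Set.Iic y) T) :=
      hT.1.insert (fun b _ _ => Or.inr b.2)
    have := hT.2 hins (Set.subset_insert _ _)
    rw [this]; exact Set.mem_insert _ _
  refine ⟨Subtype.val '' T, ⟨⟨?_, ?_⟩, ?_⟩, ⟨_, hyT, rfl⟩⟩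
  · rintro - ⟨a, -, rfl⟩; exact a.2
  · rintro - ⟨a, ha, rfl⟩ - ⟨b, hb, rfl⟩ hne
    exact hT.1 ha hb (fun h => hne (congrArg _ h))
  · intro D hD hsub
    set D' : Set (Set.Iic y) := {d | (d : P) ∈ D} with hD'
    have hchain : IsChain (fun a b : Set.Iic y => (a : P) ≤ b) D' := by
      intro a ha b hb hne
      exact hD.2 ha hb (fun h => hne (Subtype.ext h))
    have hTD' : T ⊆ D' := fun a ha => hsub ⟨a, ha, rfl⟩
    have := hT.2 hchain hTD'
    apply Set.Subset.antisymm hsub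
    intro d hd
    have hdy : d ≤ y := hD.1 hd
    have : (⟨d, hdy⟩ : Set.Iic y) ∈ T := by rw [this]; exact hd
    exact ⟨_, this, rfl⟩

lemma cover_deg {deg : P → ℕ} (hgraded : GradedDeg deg) {x y : P} (h : y ⋖ x) :
    deg x = deg y + 1 := by
  obtain ⟨C, hC, hyC⟩ := exists_maxChainIn y
  have hxC : x ∉ C := by
    intro hx
    have hxy : x ≤ y := hC.1.1 hx
    exact absurd hxy h.1.not_ge
  have hmax : IsMaxChainIn x (insert x C) := by
    refine ⟨⟨?_, ?_⟩, ?_⟩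
    · rintro d (rfl | hd); · exact le_refl _
      · exact (hC.1.1 hd).trans h.1.le
    · exact hC.1.2.insert (fun b hb _ => Or.inr ((hC.1.1 hb).trans h.1.le))
    · intro D hD hsub
      have hDsub : D ⊆ insert x C := by
        intro d hd
        rcases eq_or_ne d x with rfl | hdx
        · exact Set.mem_insert _ _
        · have hdley : ∀ e ∈ D, e ≠ x → e ≤ y := by
            intro e he hex
            rcases eq_or_ne e y with rfl | hey
            · exact le_refl _
            · rcases hD.2 he (hsub (Set.mem_insert_of_mem _ hyC)) hey with h1 | h1
              · exact h1
              · exfalso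
                have hex' : e ≤ x := hD.1 he
                exact h.2 (lt_of_le_of_ne h1 (Ne.symm hey)) (lt_of_le_of_ne hex' hex)
          have hD' : IsChainIn y (D \ {x}) :=
            ⟨fun e he => hdley e he.1 he.2, hD.2.mono Set.diff_subset⟩
          have hCD' : C ⊆ D \ {x} := fun c hc =>
            ⟨hsub (Set.mem_insert_of_mem _ hc), fun hcx => hxC (hcx ▸ hc)⟩
          have := hC.2 _ hD' hCD'
          right; rw [this]; exact ⟨hd, hdx⟩
      exact Set.Subset.antisymm hsub hDsub
  obtain ⟨hCfin, hCcard⟩ := hgraded y C hC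
  obtain ⟨-, hcard⟩ := hgraded x (insert x C) hmax
  rw [Set.ncard_insert_of_notMem hxC hCfin, hCcard] at hcard
  omega

lemma hasse_step {deg : P → ℕ} (hgraded : GradedDeg deg) {M : Set (P × P)}
    (hM : IsMorse M) {x y : P} (h : HasseM M x y) :
    deg y + 1 = deg x ∨ ((y, x) ∈ M ∧ deg y = deg x + 1) := by
  rcases h with ⟨hcov, -⟩ | hm
  · exact Or.inl (cover_deg hgraded hcov).symm
  · exact Or.inr ⟨hm, cover_deg hgraded (hM.1.1 _ hm)⟩

lemma no_two_up {M : Set (P × P)} (hM : IsMorse M) {x y z : P}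
    (h1 : (y, x) ∈ M) (h2 : (z, y) ∈ M) : False := by
  rcases eq_or_ne ((y, x) : P × P) (z, y) with heq | hne
  · have hyx : x ⋖ y := hM.1.1 _ h1
    injection heq with ha hb
    exact hyx.lt.ne hb
  · exact (hM.1.2 _ h1 _ h2 hne).2.1 rfl

lemma ray_descend {deg : P → ℕ} (hgraded : GradedDeg deg) {M : Set (P × P)}
    (hM : IsMorse M) {r : ℕ → P} (hr : IsRay (HasseM M) r) (j : ℕ) :
    ∃ k, j < k ∧ deg (r k) ≤ deg (r j) := by
  rcases hasse_step hgraded hM (hr.2 j) with h1 | ⟨hm1, hd1⟩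
  · exact ⟨j + 1, by omega, by omega⟩
  · rcases hasse_step hgraded hM (hr.2 (j + 1)) with h2 | ⟨hm2, -⟩
    · exact ⟨j + 1 + 1, by omega, by omega⟩
    · exact absurd (no_two_up hM hm1 hm2) id

lemma ray_tail {deg : P → ℕ} (hgraded : GradedDeg deg) {M : Set (P × P)}
    (hM : IsMorse M) {r : ℕ → P} (hr : IsRay (HasseM M) r) (j N : ℕ) :
    ∃ k, N ≤ k ∧ deg (r k) ≤ deg (r j) := by
  induction N with
  | zero => exact ⟨j, Nat.zero_le _, le_refl _⟩
  | succ n ih =>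
    obtain ⟨k, hk1, hk2⟩ := ih
    obtain ⟨k', hk'1, hk'2⟩ := ray_descend hgraded hM hr k
    exact ⟨k', by omega, hk'2.trans hk2⟩

lemma rayDeg_le {P : Type*} [PartialOrder P] (deg : P → ℕ) (hgraded : GradedDeg deg)
    (M : Set (P × P)) (hM : IsMorse M) (r s : ℕ → P)
    (hr : IsRay (HasseM M) r) (heq : RayEquiv r s) :
    sInf {i : ℕ | ∃ j : ℕ, deg (s j) = i} ≤ sInf {i : ℕ | ∃ j : ℕ, deg (r j) = i} := by
  obtain ⟨Mr, Ns, hrs⟩ := heq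
  have hne : {i : ℕ | ∃ j : ℕ, deg (r j) = i}.Nonempty := ⟨deg (r 0), 0, rfl⟩
  obtain ⟨j0, hj0⟩ := Nat.sInf_mem hne
  obtain ⟨k, hk1, hk2⟩ := ray_tail hgraded hM hr j0 Mr
  have hge : sInf {i : ℕ | ∃ j : ℕ, deg (r j) = i} ≤ deg (r k) := Nat.sInf_le ⟨k, rfl⟩
  have hkeq : deg (r k) = sInf {i : ℕ | ∃ j : ℕ, deg (r j) = i} := by omega
  have : s (Ns + (k - Mr)) = r k := by
    rw [← hrs (k - Mr)]; congr 1; omega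
  exact Nat.sInf_le ⟨Ns + (k - Mr), by rw [this, hkeq]⟩

end Aux

/-- equivalent rays of a Morse matching have the same degree. -/
theorem stmt11 {P : Type*} [PartialOrder P] (deg : P → ℕ) (hgraded : GradedDeg deg)
    (M : Set (P × P)) (hM : IsMorse M) (r s : ℕ → P)
    (hr : IsRay (HasseM M) r) (hs : IsRay (HasseM M) s) (heq : RayEquiv r s) :
    sInf {i : ℕ | ∃ j : ℕ, deg (r j) = i} = sInf {i : ℕ | ∃ j : ℕ, deg (s j) = i} := by
  refine le_antisymm ?_ ?_
  · obtain ⟨Mr, Ns, h⟩ := heq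
    exact rayDeg_le deg hgraded M hM s r hs ⟨Ns, Mr, fun i => (h i).symm⟩
  · exact rayDeg_le deg hgraded M hM r s hr heq
end

section
/- Let P be a graded poset with finite principal ideals equipped with a rayless Morse matching M, let i ∈ ℕ, and let the sets P^i, P^{i+1}_*, Lₙ, L̄ₙ and P^i_n be as defined in the context. Then for every n > 0 and every x ∈ Lₙ, the set of elements of P^i_n strictly greater than x is exactly {m_x}. -/
/-- The subsets `P^n` of the proof of the main theorem: `P⁰` is the set of
critical 0-cells; `P^{n+1}` is the union of `P^{n+1}_*` (which is `P^n` together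
with the noncritical `n`-cells not contained in `P^n` and their
`(n+1)`-dimensional matches) and the set of critical `(n+1)`-cells. -/
def Pn {P : Type*} [PartialOrder P] (M : Set (P × P)) (deg : P → ℕ) : ℕ → Set P
  | 0 => {x | deg x = 0 ∧ Critical M x}
  | (n + 1) =>
      (Pn M deg n ∪ {x | deg x = n ∧ ¬ Critical M x ∧ x ∉ Pn M deg n} ∪
        {z | deg z = n + 1 ∧
          ∃ x, (deg x = n ∧ ¬ Critical M x ∧ x ∉ Pn M deg n) ∧ (z, x) ∈ M}) ∪
      {c | deg c = n + 1 ∧ Critical M c}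

/-- `P^{i+1}_*`: the union of `P^i`, the noncritical `i`-cells not contained in
`P^i`, and their `(i+1)`-dimensional matches. -/
def PstarSucc {P : Type*} [PartialOrder P] (M : Set (P × P)) (deg : P → ℕ)
    (i : ℕ) : Set P :=
  Pn M deg i ∪ {x | deg x = i ∧ ¬ Critical M x ∧ x ∉ Pn M deg i} ∪
    {z | deg z = i + 1 ∧
      ∃ x, (deg x = i ∧ ¬ Critical M x ∧ x ∉ Pn M deg i) ∧ (z, x) ∈ M}

/-- `Lₙ = {x ∈ P^{i+1}_* : deg x = i and L_M(x) = n}`. -/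
def Lset {P : Type*} [PartialOrder P] (M : Set (P × P)) (deg : P → ℕ)
    (i n : ℕ) : Set P :=
  {x | x ∈ PstarSucc M deg i ∧ deg x = i ∧ LM M deg x = n}

/-- `L̄ₙ = Lₙ ∪ {m_x : x ∈ Lₙ}`, where `m_x` is the `(i+1)`-cell matched with
`x`. -/
def Lbar {P : Type*} [PartialOrder P] (M : Set (P × P)) (deg : P → ℕ)
    (i n : ℕ) : Set P :=
  Lset M deg i n ∪ {z | deg z = i + 1 ∧ ∃ x ∈ Lset M deg i n, (z, x) ∈ M}

/-- `P^i_k = P^i ∪ ⋃_{1 ≤ n ≤ k} L̄ₙ`. -/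
def Pik {P : Type*} [PartialOrder P] (M : Set (P × P)) (deg : P → ℕ)
    (i k : ℕ) : Set P :=
  Pn M deg i ∪ ⋃ n ∈ Set.Icc 1 k, Lbar M deg i n


section AuxLemmas

lemma no_closed_walk {V : Type*} {A : V → V → Prop} (h : DAcyclic A) :
    ∀ m, 0 < m → ∀ w : ℕ → V, w m = w 0 → ¬ (∀ i, i < m → A (w i) (w (i + 1))) := by
  intro m
  induction m using Nat.strong_induction_on with
  | _ m ih =>
    intro hm w hclose harr
    by_cases hinj : ∀ i j, i ≤ m - 1 → j ≤ m - 1 → w i = w j → i = j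
    · refine h ⟨m - 1, w, ⟨hinj, fun i hi => harr i (by omega)⟩, ?_⟩
      have h1 : m - 1 + 1 = m := by omega
      have := harr (m - 1) (by omega)
      rw [h1, hclose] at this
      exact this
    · push_neg at hinj
      obtain ⟨i, j, hi, hj, heq, hne⟩ := hinj
      have key : ∀ a b : ℕ, a < b → b ≤ m - 1 → w a = w b → False := by
        intro a b hab hb hw
        exact ih (b - a) (by omega) (by omega) (fun t => w (a + t))
          (by show w (a + (b - a)) = w (a + 0); rw [Nat.add_sub_cancel' hab.le, Nat.add_zero, hw])
          (fun t ht => by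
            have := harr (a + t) (by omega)
            simpa [Nat.add_assoc] using this)
      rcases lt_or_gt_of_ne hne with hlt | hlt
      · exact key i j hlt hj heq
      · exact key j i hlt hi heq.symm


variable {P : Type*} [PartialOrder P] {deg : P → ℕ} {M : Set (P × P)}

lemma exists_maxchain (hfin : ∀ x : P, (Set.Iic x).Finite) (y : P) {C : Set P}
    (hC : IsChainIn y C) : ∃ D : Set P, IsMaxChainIn y D ∧ C ⊆ D := by
  have hfs : {D : Set P | IsChainIn y D ∧ C ⊆ D}.Finite :=
    Set.Finite.subset (hfin y).finite_subsets (fun D hD => hD.1.1)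
  obtain ⟨D, hD, hmax⟩ := Set.Finite.exists_maximalFor id _ hfs ⟨C, hC, subset_rfl⟩
  refine ⟨D, ⟨hD.1, fun E hE hDE => ?_⟩, hD.2⟩
  exact Set.Subset.antisymm hDE (hmax ⟨hE, hD.2.trans hDE⟩ hDE)

lemma maxchain_mem {y : P} {C : Set P} (hC : IsMaxChainIn y C) : y ∈ C := by
  have h : IsChainIn y (insert y C) := by
    refine ⟨Set.insert_subset (Set.mem_Iic.mpr le_rfl) hC.1.1, ?_⟩
    exact hC.1.2.insert (fun b hb _ => Or.inr (hC.1.1 hb))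
  have := hC.2 _ h (Set.subset_insert _ _)
  rw [this]; exact Set.mem_insert _ _

lemma deg_lt (hgraded : GradedDeg deg) (hfin : ∀ x : P, (Set.Iic x).Finite)
    {x y : P} (hxy : x < y) : deg x < deg y := by
  obtain ⟨C, hC, -⟩ := exists_maxchain hfin x (C := ∅) ⟨Set.empty_subset _, IsChain.empty⟩
  have hCy : IsChainIn y (insert y C) := by
    refine ⟨Set.insert_subset (Set.mem_Iic.mpr le_rfl)
      (hC.1.1.trans (Set.Iic_subset_Iic.mpr hxy.le)), ?_⟩
    exact hC.1.2.insert (fun b hb _ => Or.inr ((hC.1.1 hb).trans hxy.le))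
  obtain ⟨D, hD, hsub⟩ := exists_maxchain hfin y hCy
  have hyC : y ∉ C := fun h => absurd (Set.mem_Iic.mp (hC.1.1 h)) hxy.not_ge
  have h1 := hgraded x C hC
  have h2 := hgraded y D hD
  have hle : (insert y C).ncard ≤ D.ncard := Set.ncard_le_ncard hsub h2.1
  rw [Set.ncard_insert_of_notMem hyC h1.1] at hle
  omega

lemma deg_covBy (hgraded : GradedDeg deg) (hfin : ∀ x : P, (Set.Iic x).Finite)
    {x y : P} (hxy : x ⋖ y) : deg y = deg x + 1 := by
  obtain ⟨C, hC, -⟩ := exists_maxchain hfin x (C := ∅) ⟨Set.empty_subset _, IsChain.empty⟩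
  have hxC : x ∈ C := maxchain_mem hC
  have hCy : IsChainIn y (insert y C) := by
    refine ⟨Set.insert_subset (Set.mem_Iic.mpr le_rfl)
      (hC.1.1.trans (Set.Iic_subset_Iic.mpr hxy.1.le)), ?_⟩
    exact hC.1.2.insert (fun b hb _ => Or.inr ((hC.1.1 hb).trans hxy.1.le))
  obtain ⟨D, hD, hsub⟩ := exists_maxchain hfin y hCy
  have hyC : y ∉ C := fun h => absurd (Set.mem_Iic.mp (hC.1.1 h)) hxy.1.not_ge
  -- D \ {y} ⊆ Iic x
  have hDx : D \ {y} ⊆ Set.Iic x := by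
    intro d hd
    rcases eq_or_ne d x with rfl | hdx
    · exact Set.mem_Iic.mpr le_rfl
    have hcomp := hD.1.2 hd.1 (hsub (Set.mem_insert_of_mem _ hxC)) hdx
    rcases hcomp with h | h
    · exact Set.mem_Iic.mpr h
    · have hdy : d < y := lt_of_le_of_ne (Set.mem_Iic.mp (hD.1.1 hd.1)) hd.2
      exact absurd hdy (hxy.2 (lt_of_le_of_ne h (Ne.symm hdx)))
  have hchain : IsChainIn x (D \ {y}) := ⟨hDx, hD.1.2.mono Set.diff_subset⟩
  have hCeq : C = D \ {y} := hC.2 _ hchain (by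
    intro c hc
    exact ⟨hsub (Set.mem_insert_of_mem _ hc), fun h => hyC (h ▸ hc)⟩)
  have hyD : y ∈ D := hsub (Set.mem_insert _ _)
  have hDeq : D = insert y (D \ {y}) := by
    ext d; simp only [Set.mem_insert_iff, Set.mem_diff, Set.mem_singleton_iff]
    constructor
    · intro hd; rcases eq_or_ne d y with rfl | h; exact Or.inl rfl; exact Or.inr ⟨hd, h⟩
    · rintro (rfl | ⟨hd, -⟩); exact hyD; exact hd
  have h1 := hgraded x C hC
  have h2 := hgraded y D hD
  have hcard : D.ncard = C.ncard + 1 := by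
    conv_lhs => rw [hDeq]
    rw [Set.ncard_insert_of_notMem (a := y) (s := D \ {y})
      (fun h => h.2 rfl) (h2.1.subset Set.diff_subset), ← hCeq]
  rw [h1.2] at hcard; rw [hcard] at h2
  omega


lemma matching_unique_fst {M : Set (P × P)} (hM : IsMatching M) {z z' x : P}
    (h1 : (z, x) ∈ M) (h2 : (z', x) ∈ M) : z = z' := by
  by_contra hne
  exact (hM.2 _ h1 _ h2 (by simp [hne])).2.2.2 rfl

lemma Dk_mono {x : P} {k l : ℕ} (h : k ≤ l) : Dk M deg x k ⊆ Dk M deg x l := by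
  induction l with
  | zero => rw [Nat.le_zero.mp h]
  | succ l ih =>
    rcases Nat.eq_or_lt_of_le h with rfl | h'
    · rfl
    · exact (ih (by omega)).trans (Set.subset_union_left)

lemma mem_Dset_self (x : P) : x ∈ Dset M deg x :=
  Set.mem_iUnion.mpr ⟨0, rfl⟩

lemma Mplus_subset_Dset {x y : P} (hy : y ∈ Dset M deg x) :
    Mplus M deg y ⊆ Dset M deg x := by
  obtain ⟨k, hk⟩ := Set.mem_iUnion.mp hy
  intro w hw
  exact Set.mem_iUnion.mpr ⟨k + 1, Or.inr (Set.mem_biUnion hk hw)⟩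

lemma Dset_trans {x u : P} (hu : u ∈ Dset M deg x) :
    Dset M deg u ⊆ Dset M deg x := by
  suffices h : ∀ k, Dk M deg u k ⊆ Dset M deg x by
    intro w hw; obtain ⟨k, hk⟩ := Set.mem_iUnion.mp hw; exact h k hk
  intro k
  induction k with
  | zero => intro w hw; exact hw ▸ hu
  | succ k ih =>
    rintro w (hw | hw)
    · exact ih hw
    · obtain ⟨y, hy, hwy⟩ := Set.mem_iUnion₂.mp hw
      exact Mplus_subset_Dset (ih hy) hwy

lemma Dset_eq_of_Mplus_empty {x : P} (h : Mplus M deg x = ∅) :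
    Dset M deg x = {x} := by
  apply Set.Subset.antisymm
  · suffices hs : ∀ k, Dk M deg x k ⊆ {x} by
      intro w hw; obtain ⟨k, hk⟩ := Set.mem_iUnion.mp hw; exact hs k hk
    intro k
    induction k with
    | zero => exact subset_rfl
    | succ k ih =>
      rintro w (hw | hw)
      · exact ih hw
      · obtain ⟨y, hy, hwy⟩ := Set.mem_iUnion₂.mp hw
        have hyx : y = x := ih hy
        rw [hyx, h] at hwy
        exact absurd hwy (Set.notMem_empty w)
  · rintro w rfl; exact mem_Dset_self _

lemma walk_of_mem_Dset {x u : P} (hu : u ∈ Dset M deg x) :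
    ∃ (l : ℕ) (q : ℕ → P), q 0 = x ∧ q l = u ∧
      ∀ i, i < l → DArrow M deg x (q i) (q (i + 1)) := by
  suffices hs : ∀ k, ∀ u ∈ Dk M deg x k, ∃ (l : ℕ) (q : ℕ → P), q 0 = x ∧ q l = u ∧
      ∀ i, i < l → DArrow M deg x (q i) (q (i + 1)) by
    obtain ⟨k, hk⟩ := Set.mem_iUnion.mp hu; exact hs k u hk
  intro k
  induction k with
  | zero =>
    intro u hu'
    have hux : u = x := hu'
    subst hux
    exact ⟨0, fun _ => u, rfl, rfl, by omega⟩
  | succ k ih =>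
    rintro u (hk | hk)
    · exact ih u hk
    · obtain ⟨y, hy, huy⟩ := Set.mem_iUnion₂.mp hk
      obtain ⟨l, q, hq0, hql, hqa⟩ := ih y hy
      refine ⟨l + 1, fun j => if j = l + 1 then u else q j, by simp [hq0], by simp, ?_⟩
      intro i hi
      show DArrow M deg x (if i = l + 1 then u else q i)
        (if i + 1 = l + 1 then u else q (i + 1))
      rcases Nat.lt_or_ge i l with h' | h'
      · rw [if_neg (by omega), if_neg (by omega)]
        exact hqa i h'
      · have hil : i = l := by omega
        rw [if_neg (by omega), if_pos (by omega), hil, hql]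
        exact ⟨Set.mem_iUnion.mpr ⟨k, hy⟩, huy⟩

/-- A D(x)-walk translates to a HasseM walk of twice the length. -/
lemma hasse_walk_of_DWalk (hM : IsMatching M) {x : P} {l : ℕ} {q : ℕ → P}
    (hqa : ∀ i, i < l → DArrow M deg x (q i) (q (i + 1))) :
    ∃ h : ℕ → P, h 0 = q 0 ∧ h (2 * l) = q l ∧
      ∀ j, j < 2 * l → HasseM M (h j) (h (j + 1)) := by
  classical
  haveI : Nonempty P := ⟨x⟩
  have hz : ∀ i, i < l → ∃ z : P, (z, q i) ∈ M ∧ deg z = deg (q i) + 1 ∧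
      q (i + 1) ≠ q i ∧ q (i + 1) ⋖ z := fun i hi => (hqa i hi).2
  choose! Z hZ using hz
  refine ⟨fun j => if Even j then q (j / 2) else Z (j / 2), by norm_num, by
    simp [Nat.mul_div_cancel_left l (by norm_num : 0 < 2)], ?_⟩
  intro j hj
  rcases Nat.even_or_odd j with he | ho
  · obtain ⟨t, ht⟩ := he
    have hjt : j = 2 * t := by omega
    subst hjt
    have htl : t < l := by omega
    have h1 : (2 * t) / 2 = t := by omega
    have h2 : ¬ Even (2 * t + 1) := by simp [Nat.even_add_one, Nat.even_mul]
    have h3 : (2 * t + 1) / 2 = t := by omega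
    simp only [if_pos (by exact ⟨t, by omega⟩ : Even (2 * t)), if_neg h2, h1, h3]
    exact Or.inr (hZ t htl).1
  · obtain ⟨t, ht⟩ := ho
    subst ht
    have htl : t < l := by omega
    have h2 : ¬ Even (2 * t + 1) := by simp [Nat.even_add_one, Nat.even_mul]
    have h3 : (2 * t + 1) / 2 = t := by omega
    have h4 : Even (2 * t + 1 + 1) := ⟨t + 1, by omega⟩
    have h5 : (2 * t + 1 + 1) / 2 = t + 1 := by omega
    simp only [if_neg h2, if_pos h4, h3, h5]
    refine Or.inl ⟨(hZ t htl).2.2.2, fun hmem => ?_⟩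
    have hne : (Z t, q t) ≠ (Z t, q (t + 1)) := by
      simp [(hZ t htl).2.2.1.symm]
    exact (hM.2 _ (hZ t htl).1 _ hmem hne).1 rfl

lemma Pn_deg_le : ∀ k, ∀ w ∈ Pn M deg k, deg w ≤ k := by
  intro k
  induction k with
  | zero => intro w hw; exact hw.1.le
  | succ k ih =>
    intro w hw
    rw [Pn, Set.mem_union, Set.mem_union, Set.mem_union] at hw
    rcases hw with ((h1 | h1) | h1) | h1
    · exact (ih w h1).trans (by omega)
    · exact h1.1.le.trans (by omega)
    · exact h1.1.le
    · exact h1.1.le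

lemma DWalk_inj (hMa : IsMatching M) (hacy : DAcyclic (HasseM M)) {x : P} {L : ℕ}
    {W : ℕ → P} (harr : ∀ i, i < L → DArrow M deg x (W i) (W (i + 1))) :
    ∀ a b, a ≤ L → b ≤ L → W a = W b → a = b := by
  have key : ∀ a b, a < b → b ≤ L → W a ≠ W b := by
    intro a b hab hb heq
    obtain ⟨h, hh0, hhend, hha⟩ := hasse_walk_of_DWalk (l := b - a) (q := fun t => W (a + t))
      hMa (fun t ht => by
        have := harr (a + t) (by omega)
        simpa [Nat.add_assoc] using this)
    refine no_closed_walk hacy (2 * (b - a)) (by omega) h ?_ hha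
    rw [hhend, hh0]
    show W (a + (b - a)) = W (a + 0)
    rw [Nat.add_sub_cancel' hab.le, Nat.add_zero]
    exact heq.symm
  intro a b ha hb heq
  rcases lt_trichotomy a b with h | h | h
  · exact absurd heq (key a b h hb)
  · exact h
  · exact absurd heq.symm (key b a h ha)

end AuxLemmas


/-- for every `n > 0` and every `x ∈ Lₙ`, the set of elements of
`P^i_n` strictly greater than `x` is exactly `{m_x}`, where `m_x` is the unique
`(i+1)`-cell matched with `x`. -/
theorem stmt15 {P : Type*} [PartialOrder P] (deg : P → ℕ)
    (hgraded : GradedDeg deg) (hfin : ∀ x : P, (Set.Iic x).Finite)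
    (M : Set (P × P)) (hM : IsMorse M) (hrayless : Rayless (HasseM M)) (i : ℕ) :
    ∀ n : ℕ, 0 < n → ∀ x ∈ Lset M deg i n,
      ∃ z : P, (z, x) ∈ M ∧ deg z = i + 1 ∧
        {y | y ∈ Pik M deg i n ∧ x < y} = {z} := by
  intro n hn x hxL
  obtain ⟨hxP, hdegx, hLMx⟩ := hxL
  have hMatch := hM.1
  have hAcy := hM.2
  -- extract a longest path in `D_M(x)`, of length `n`
  have hSne : {k | ∃ p : ℕ → P, IsPathOn (DArrow M deg x) k p ∧
      ∀ j ≤ k, p j ∈ Dset M deg x}.Nonempty :=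
    ⟨0, fun _ => x, ⟨fun a b ha hb _ => by omega, fun a ha => absurd ha (by omega)⟩,
      fun j _ => mem_Dset_self x⟩
  have hnS : n ∈ {k | ∃ p : ℕ → P, IsPathOn (DArrow M deg x) k p ∧
      ∀ j ≤ k, p j ∈ Dset M deg x} := by
    have hsupx : sSup {k | ∃ p : ℕ → P, IsPathOn (DArrow M deg x) k p ∧
        ∀ j ≤ k, p j ∈ Dset M deg x} = n := hLMx
    have hSbdd : BddAbove {k | ∃ p : ℕ → P, IsPathOn (DArrow M deg x) k p ∧
        ∀ j ≤ k, p j ∈ Dset M deg x} := by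
      by_contra hb
      rw [csSup_of_not_bddAbove hb, csSup_empty, Nat.bot_eq_zero] at hsupx
      omega
    rw [← hsupx]
    exact Nat.sSup_mem hSne hSbdd
  clear hSne
  obtain ⟨p, hp, hpD⟩ := hnS
  -- `Mplus x` is nonempty, yielding the match `z` of `x`
  have hMp : (Mplus M deg x).Nonempty := by
    rw [Set.nonempty_iff_ne_empty]
    intro hemp
    have hsing := Dset_eq_of_Mplus_empty (M := M) (deg := deg) hemp
    have h0 : p 0 = x := by
      have := hpD 0 (by omega)
      rw [hsing] at this
      exact this
    have h1 := (hp.2 0 hn).2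
    rw [h0, hemp] at h1
    exact absurd h1 (Set.notMem_empty _)
  obtain ⟨w0, z, hzM, hdegz, -, -⟩ := hMp
  refine ⟨z, hzM, by rw [hdegz, hdegx], ?_⟩
  ext y
  simp only [Set.mem_setOf_eq, Set.mem_singleton_iff]
  constructor
  · rintro ⟨hyP, hxy⟩
    have hdy := deg_lt hgraded hfin hxy
    rcases hyP with hyPn | hyU
    · exact absurd (Pn_deg_le i y hyPn) (by omega)
    obtain ⟨m, hm, hyLb⟩ := Set.mem_iUnion₂.mp hyU
    have hm1 : 1 ≤ m := hm.1
    have hmn : m ≤ n := hm.2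
    rcases hyLb with hyLs | hyMt
    · exact absurd hyLs.2.1 (by omega)
    obtain ⟨hdegy, x', hx'L, hyx'⟩ := hyMt
    have hcov : x ⋖ y := ⟨hxy, fun c h1 h2 => by
      have d1 := deg_lt hgraded hfin h1
      have d2 := deg_lt hgraded hfin h2
      omega⟩
    by_cases hxx' : x' = x
    · subst hxx'
      exact matching_unique_fst hMatch hyx' hzM
    exfalso
    have hdegx' : deg x' = i := hx'L.2.1
    have hxMp : x ∈ Mplus M deg x' :=
      ⟨y, hyx', by rw [hdegy, hdegx'], fun h => hxx' h.symm, hcov⟩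
    have hxD' : x ∈ Dset M deg x' := Mplus_subset_Dset (mem_Dset_self x') hxMp
    have hsub : Dset M deg x ⊆ Dset M deg x' := Dset_trans hxD'
    obtain ⟨l, q, hq0, hql, hqa⟩ := walk_of_mem_Dset (hpD 0 (by omega))
    -- concatenated walk `x' → x → ⋯ → p 0 → ⋯ → p n` inside `D_M(x')`
    obtain ⟨W, hW0, hWq, hWp⟩ : ∃ W : ℕ → P, W 0 = x' ∧
        (∀ j, 1 ≤ j → j ≤ l + 1 → W j = q (j - 1)) ∧
        (∀ j, l + 2 ≤ j → W j = p (j - (l + 1))) := by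
      refine ⟨fun j => if j = 0 then x' else if j ≤ l + 1 then q (j - 1)
        else p (j - (l + 1)), rfl, ?_, ?_⟩
      · intro j h1 h2
        show (if j = 0 then x' else if j ≤ l + 1 then q (j - 1)
          else p (j - (l + 1))) = q (j - 1)
        rw [if_neg (by omega), if_pos h2]
      · intro j h1
        show (if j = 0 then x' else if j ≤ l + 1 then q (j - 1)
          else p (j - (l + 1))) = p (j - (l + 1))
        rw [if_neg (by omega), if_neg (by omega)]
    have hqD : ∀ j, j ≤ l → q j ∈ Dset M deg x := by
      intro j hj
      rcases Nat.lt_or_ge j l with h | h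
      · exact (hqa j h).1
      · have hjl : j = l := by omega
        rw [hjl, hql]
        exact hpD 0 (by omega)
    have hWv : ∀ j, j ≤ l + 1 + n → W j ∈ Dset M deg x' := by
      intro j hj
      rcases Nat.eq_zero_or_pos j with rfl | hj0
      · rw [hW0]; exact mem_Dset_self x'
      rcases le_or_gt j (l + 1) with h | h
      · rw [hWq j hj0 h]
        exact hsub (hqD (j - 1) (by omega))
      · rw [hWp j (by omega)]
        exact hsub (hpD (j - (l + 1)) (by omega))
    have hWa : ∀ j, j < l + 1 + n → DArrow M deg x' (W j) (W (j + 1)) := by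
      intro j hj
      rcases Nat.eq_zero_or_pos j with rfl | hj0
      · rw [hW0, hWq 1 le_rfl (by omega)]
        have e0 : (1 : ℕ) - 1 = 0 := rfl
        rw [e0, hq0]
        exact ⟨mem_Dset_self x', hxMp⟩
      rcases Nat.lt_or_ge j (l + 1) with h | h
      · rw [hWq j hj0 (by omega), hWq (j + 1) (by omega) (by omega)]
        have h2 : j + 1 - 1 = j - 1 + 1 := by omega
        rw [h2]
        have harr := hqa (j - 1) (by omega)
        exact ⟨hsub harr.1, harr.2⟩
      rcases Nat.eq_or_lt_of_le h with heq | h'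
      · rw [hWq j hj0 (by omega), hWp (j + 1) (by omega)]
        have e1 : j - 1 = l := by omega
        have e2 : j + 1 - (l + 1) = 1 := by omega
        rw [e1, e2, hql]
        exact ⟨hsub (hpD 0 (by omega)), (hp.2 0 hn).2⟩
      · rw [hWp j (by omega), hWp (j + 1) (by omega)]
        have e : j + 1 - (l + 1) = j - (l + 1) + 1 := by omega
        rw [e]
        exact ⟨hsub (hpD (j - (l + 1)) (by omega)), (hp.2 (j - (l + 1)) (by omega)).2⟩
    have hinj := DWalk_inj hMatch hAcy hWa
    have hLS : (l + 1 + n) ∈ {k | ∃ pp : ℕ → P, IsPathOn (DArrow M deg x') k pp ∧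
        ∀ j ≤ k, pp j ∈ Dset M deg x'} := ⟨W, ⟨hinj, hWa⟩, hWv⟩
    have hle : l + 1 + n ≤ m := by
      have hsupx' : sSup {k | ∃ pp : ℕ → P, IsPathOn (DArrow M deg x') k pp ∧
          ∀ j ≤ k, pp j ∈ Dset M deg x'} = m := hx'L.2.2
      have hbdd : BddAbove {k | ∃ pp : ℕ → P, IsPathOn (DArrow M deg x') k pp ∧
          ∀ j ≤ k, pp j ∈ Dset M deg x'} := by
        by_contra hb
        rw [csSup_of_not_bddAbove hb, csSup_empty, Nat.bot_eq_zero] at hsupx'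
        omega
      have h := le_csSup hbdd hLS
      rw [hsupx'] at h
      exact h
    omega
  · rintro rfl
    refine ⟨Or.inr (Set.mem_iUnion₂.mpr ⟨n, ⟨hn, le_rfl⟩,
      Or.inr ⟨by rw [hdegz, hdegx], x, ⟨hxP, hdegx, hLMx⟩, hzM⟩⟩), ?_⟩
    exact (hMatch.1 _ hzM).lt
end
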